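/- arXiv:1910.11923 — 2 statements merged into one kernel-verified Lean document; each statement's English description precedes it below -/
import Mathlib

section
/- Let x_1,...,x_n be independent {±1}-valued random variables with P(x_j = 1) = p_j, and let the label be y = ∏_{j ∈ I} x_j for a set I of size k. Fix ξ ∈ (0, 1/4) and assume p_j ∈ (ξ, 1/2 − ξ) ∪ (1/2 + ξ, 1 − ξ) for all j. Then for any nonempty subset I' ⊆ I, letting z = ∏_{j ∈ I'} x_j, we have |E[z·y]| − |E[y]| ≥ (2ξ)^k. -/
open MeasureTheory ProbabilityTheory

section aux

variable {Ω : Type*} [MeasurableSpace Ω] {μ : Measure Ω} [IsProbabilityMeasure μ]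

private lemma integrable_pm {f : Ω → ℝ} (hm : Measurable f)
    (hval : ∀ ω, f ω = 1 ∨ f ω = -1) : Integrable f μ := by
  refine Integrable.mono' (integrable_const (1:ℝ)) hm.aestronglyMeasurable ?_
  refine ae_of_all _ fun ω => ?_
  rcases hval ω with h | h <;> simp [h]

private lemma integral_pm {f : Ω → ℝ} (hm : Measurable f)
    (hval : ∀ ω, f ω = 1 ∨ f ω = -1) {q : ℝ} (hq0 : 0 ≤ q)
    (hq : μ {ω | f ω = 1} = ENNReal.ofReal q) :
    ∫ ω, f ω ∂μ = 2 * q - 1 := by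
  have hA : MeasurableSet {ω | f ω = 1} := hm (measurableSet_singleton 1)
  have hle : ENNReal.ofReal q ≤ 1 := by rw [← hq]; exact prob_le_one
  have h1 : ∫ ω in {ω | f ω = 1}, f ω ∂μ = q := by
    rw [setIntegral_congr_fun hA (g := fun _ => (1:ℝ)) (fun ω hω => hω), setIntegral_const,
      measureReal_def, hq, ENNReal.toReal_ofReal hq0, smul_eq_mul, mul_one]
  have h2 : ∫ ω in {ω | f ω = 1}ᶜ, f ω ∂μ = -(1 - q) := by
    have hc : ∀ ω ∈ {ω | f ω = 1}ᶜ, f ω = -1 := by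
      intro ω hω
      rcases hval ω with h | h
      · exact absurd h hω
      · exact h
    rw [setIntegral_congr_fun hA.compl hc, setIntegral_const, measureReal_def, prob_compl_eq_one_sub hA, hq,
      ENNReal.toReal_sub_of_le hle (by simp), ENNReal.toReal_one, ENNReal.toReal_ofReal hq0,
      smul_eq_mul]
    ring
  have := integral_add_compl hA (integrable_pm hm hval (μ := μ))
  rw [h1, h2] at this
  rw [← this]; ring

private lemma integral_prod_pm {n : ℕ} {X : Fin n → Ω → ℝ}
    (hmeas : ∀ j, Measurable (X j))
    (hval : ∀ j ω, X j ω = 1 ∨ X j ω = -1)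
    (hind : iIndepFun X μ)
    (S : Finset (Fin n)) :
    ∫ ω, ∏ j ∈ S, X j ω ∂μ = ∏ j ∈ S, ∫ ω, X j ω ∂μ := by
  induction S using Finset.cons_induction with
  | empty => simp
  | cons i S hi ih =>
    have hindep : IndepFun (∏ j ∈ S, X j) (X i) μ :=
      hind.indepFun_finsetProd_of_notMem hmeas hi
    have hfun : (∏ j ∈ S, X j) = fun ω => ∏ j ∈ S, X j ω := funext fun ω => by simp
    have hPm : Measurable (∏ j ∈ S, X j) := by
      rw [hfun]; exact Finset.measurable_prod S fun j _ => hmeas j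
    have hmul := hindep.integral_mul_eq_mul_integral hPm.aestronglyMeasurable (hmeas i).aestronglyMeasurable
    simp only [Finset.prod_cons]
    calc ∫ ω, X i ω * ∏ j ∈ S, X j ω ∂μ
        = ∫ ω, ((∏ j ∈ S, X j) * X i) ω ∂μ := by
          refine integral_congr_ae (ae_of_all _ fun ω => ?_)
          simp [mul_comm]
      _ = (∫ ω, (∏ j ∈ S, X j) ω ∂μ) * ∫ ω, X i ω ∂μ := hmul
      _ = (∫ ω, X i ω ∂μ) * ∏ x ∈ S, ∫ ω, X x ω ∂μ := by
          rw [mul_comm, ← ih, hfun]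

end aux

/-- for independent ±1 bits with `P(x_j = 1) = p_j`,
`p_j ∈ (ξ, 1/2−ξ) ∪ (1/2+ξ, 1−ξ)`, label `y = ∏_{j∈I} x_j` with `|I| = k`, and
any nonempty `I' ⊆ I`, the variable `z = ∏_{j∈I'} x_j` satisfies
`|E[z·y]| − |E[y]| ≥ (2ξ)^k`. -/
theorem stmt2 {Ω : Type*} [MeasurableSpace Ω] (μ : Measure Ω) [IsProbabilityMeasure μ]
    (n k : ℕ) (X : Fin n → Ω → ℝ)
    (hmeas : ∀ j, Measurable (X j))
    (hval : ∀ j ω, X j ω = 1 ∨ X j ω = -1)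
    (hind : iIndepFun X μ)
    (p : Fin n → ℝ) (hp : ∀ j, μ {ω | X j ω = 1} = ENNReal.ofReal (p j))
    (ξ : ℝ) (hξ : ξ ∈ Set.Ioo (0 : ℝ) (1/4))
    (hpr : ∀ j, p j ∈ Set.Ioo ξ (1/2 - ξ) ∪ Set.Ioo (1/2 + ξ) (1 - ξ))
    (I : Finset (Fin n)) (hk : I.card = k)
    (I' : Finset (Fin n)) (hI' : I' ⊆ I) (hne : I'.Nonempty) :
    |∫ ω, (∏ j ∈ I', X j ω) * (∏ j ∈ I, X j ω) ∂μ| -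
      |∫ ω, (∏ j ∈ I, X j ω) ∂μ| ≥ (2*ξ)^k := by
  obtain ⟨hξ0, hξ4⟩ := hξ
  -- bounds on |2 p j - 1|
  have habs : ∀ j, 2*ξ ≤ |2 * p j - 1| ∧ |2 * p j - 1| ≤ 1 - 2*ξ := by
    intro j
    rcases hpr j with ⟨h1, h2⟩ | ⟨h1, h2⟩
    · constructor
      · rw [abs_of_nonpos (by linarith)]; linarith
      · rw [abs_of_nonpos (by linarith)]; linarith
    · constructor
      · rw [abs_of_nonneg (by linarith)]; linarith
      · rw [abs_of_nonneg (by linarith)]; linarith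
  have hq0 : ∀ j, 0 ≤ p j := fun j => by
    rcases hpr j with ⟨h1, _⟩ | ⟨h1, _⟩ <;> linarith
  have hEj : ∀ j, ∫ ω, X j ω ∂μ = 2 * p j - 1 := fun j =>
    integral_pm (hmeas j) (hval j) (hq0 j) (hp j)
  -- z * y = ∏_{I \ I'} X pointwise
  have hzy : ∀ ω, (∏ j ∈ I', X j ω) * (∏ j ∈ I, X j ω) = ∏ j ∈ I \ I', X j ω := by
    intro ω
    have hsq : (∏ j ∈ I', X j ω) * (∏ j ∈ I', X j ω) = 1 := by
      rw [← Finset.prod_mul_distrib]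
      rw [Finset.prod_congr rfl (fun j _ => show X j ω * X j ω = 1 by
        rcases hval j ω with h | h <;> rw [h] <;> norm_num)]
      exact Finset.prod_const_one
    calc (∏ j ∈ I', X j ω) * (∏ j ∈ I, X j ω)
        = (∏ j ∈ I', X j ω) * ((∏ j ∈ I \ I', X j ω) * ∏ j ∈ I', X j ω) := by
          rw [Finset.prod_sdiff hI']
      _ = (∏ j ∈ I \ I', X j ω) * ((∏ j ∈ I', X j ω) * (∏ j ∈ I', X j ω)) := by ring
      _ = ∏ j ∈ I \ I', X j ω := by rw [hsq, mul_one]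
  have hEzy : ∫ ω, (∏ j ∈ I', X j ω) * (∏ j ∈ I, X j ω) ∂μ
      = ∏ j ∈ I \ I', (2 * p j - 1) := by
    rw [integral_congr_ae (ae_of_all _ hzy), integral_prod_pm hmeas hval hind,
      Finset.prod_congr rfl (fun j _ => hEj j)]
  have hEy : ∫ ω, (∏ j ∈ I, X j ω) ∂μ = ∏ j ∈ I, (2 * p j - 1) := by
    rw [integral_prod_pm hmeas hval hind, Finset.prod_congr rfl (fun j _ => hEj j)]
  rw [hEzy, hEy]
  -- now pure algebra
  set m := I'.card with hm
  have hmpos : 0 < m := Finset.card_pos.mpr hne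
  have hcard : (I \ I').card + m = k := by
    rw [hm, Finset.card_sdiff_of_subset hI', Nat.sub_add_cancel (Finset.card_le_card hI'), hk]
  have h2ξ0 : (0:ℝ) ≤ 2*ξ := by linarith
  have h2ξ1 : 2*ξ ≤ 1 - 2*ξ := by linarith
  have hP1 : (2*ξ)^(I \ I').card ≤ |∏ j ∈ I \ I', (2 * p j - 1)| := by
    rw [Finset.abs_prod, ← Finset.prod_const]
    exact Finset.prod_le_prod (fun j _ => h2ξ0) (fun j _ => (habs j).1)
  have hP2 : |∏ j ∈ I', (2 * p j - 1)| ≤ (1 - 2*ξ)^m := by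
    rw [Finset.abs_prod, hm, ← Finset.prod_const]
    exact Finset.prod_le_prod (fun j _ => abs_nonneg _) (fun j _ => (habs j).2)
  have hpow : (2*ξ)^m ≤ 1 - (1 - 2*ξ)^m := by
    have h1 : (2*ξ)^m ≤ 2*ξ := pow_le_of_le_one h2ξ0 (by linarith) hmpos.ne'
    have h2 : (1-2*ξ)^m ≤ 1-2*ξ := pow_le_of_le_one (by linarith) (by linarith) hmpos.ne'
    linarith
  have hsplit : |∏ j ∈ I, (2 * p j - 1)|
      = |∏ j ∈ I \ I', (2 * p j - 1)| * |∏ j ∈ I', (2 * p j - 1)| := by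
    rw [← abs_mul, Finset.prod_sdiff hI']
  rw [hsplit, ge_iff_le]
  have key : (2*ξ)^(I \ I').card * (2*ξ)^m ≤
      |∏ j ∈ I \ I', (2 * p j - 1)| * (1 - |∏ j ∈ I', (2 * p j - 1)|) := by
    refine mul_le_mul hP1 ?_ (pow_nonneg h2ξ0 m) (abs_nonneg _)
    linarith
  calc (2*ξ)^k = (2*ξ)^(I \ I').card * (2*ξ)^m := by rw [← pow_add, hcard]
    _ ≤ |∏ j ∈ I \ I', (2 * p j - 1)| * (1 - |∏ j ∈ I', (2 * p j - 1)|) := key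
    _ = |∏ j ∈ I \ I', (2 * p j - 1)|
        - |∏ j ∈ I \ I', (2 * p j - 1)| * |∏ j ∈ I', (2 * p j - 1)| := by ring
end

section
/- Consider the generative distributions D^(0),...,D^(d) defined for a tree circuit with gates in {AND, OR, NAND, NOR}: D^(0) is uniform on {((1,1),1), ((−1,−1),−1)} identifying the single bit with the label; and D^(i) is obtained from D^(i−1) by replacing each bit z_j with a uniformly random pattern in {±1}^2 from the set of patterns mapped to z_j by gate γ_{i,j}. Then for every layer i and coordinate j, the conditional probabilities p⁺ = P(x_j = 1 | y = 1) and p⁻ = P(x_j = 1 | y = −1) under D^(i) satisfy |p⁺ − p⁻| = (2/3)^i. -/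
/-- The allowed gate types for the generative model: AND, OR, NAND, NOR. -/
inductive BGate | and | or | nand | nor

/-- Evaluation of a gate on ±1-encoded booleans (1 = true, −1 = false). -/
def BGate.eval : BGate → ℤ → ℤ → ℤ
  | .and,  a, b => if a = 1 ∧ b = 1 then 1 else -1
  | .or,   a, b => if a = 1 ∨ b = 1 then 1 else -1
  | .nand, a, b => if a = 1 ∧ b = 1 then -1 else 1
  | .nor,  a, b => if a = 1 ∨ b = 1 then -1 else 1

/-- ±1 encoding of a boolean. -/
def pm (b : Bool) : ℤ := if b then 1 else -1

/-- Number of input patterns in {±1}² on which gate `g` outputs `c`. -/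
def BGate.patCount (g : BGate) (c : ℤ) : ℕ :=
  (Finset.univ.filter (fun p : Bool × Bool => g.eval (pm p.1) (pm p.2) = c)).card

/-- The values of the previous (coarser) layer determined by a configuration `x`
of layer `i+1`: bit `j` is the gate `γ j` applied to the pair `(x_{2j}, x_{2j+1})`. -/
def prevLayer (i : ℕ) (γ : ℕ → BGate) (x : Fin (2^(i+1)) → ℤ) (j : Fin (2^i)) : ℤ :=
  (γ j).eval (x ⟨2*j.1, by have h := j.2; rw [pow_succ]; omega⟩)
             (x ⟨2*j.1+1, by have h := j.2; rw [pow_succ]; omega⟩)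

/-- Probability mass function of the generative distribution `D^(i)` on
configurations of layer `i` together with the label: `D^(0)` identifies the
single bit with a uniform ±1 label, and `D^(i+1)` is obtained from `D^(i)` by
replacing each bit `z_j` with a uniformly random pattern in {±1}² among those on
which gate `γ i j` outputs `z_j`. -/
noncomputable def genMass (γ : ℕ → ℕ → BGate) : (i : ℕ) → (Fin (2^i) → ℤ) → ℤ → ℝ
  | 0 => fun x y => if x ⟨0, by norm_num⟩ = y ∧ (y = 1 ∨ y = -1) then 1/2 else 0
  | (i+1) => fun x y =>
      if ∀ j, x j = 1 ∨ x j = -1 then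
        genMass γ i (prevLayer i (γ i) x) y *
          ∏ j : Fin (2^i), ((((γ i j).patCount (prevLayer i (γ i) x j) : ℝ)))⁻¹
      else 0

/-- Probability of an event under the generative distribution `D^(i)`. -/
noncomputable def genPr (γ : ℕ → ℕ → BGate) (i : ℕ)
    (E : (Fin (2^i) → ℤ) → ℤ → Prop) [∀ x y, Decidable (E x y)] : ℝ :=
  ∑ s : Fin (2^i) → Bool, ∑ b : Bool,
    if E (fun j => pm (s j)) (pm b) then genMass γ i (fun j => pm (s j)) (pm b) else 0

/-- Expectation of `f(x, y)` under the generative distribution `D^(i)`. -/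
noncomputable def genE (γ : ℕ → ℕ → BGate) (i : ℕ)
    (f : (Fin (2^i) → ℤ) → ℤ → ℝ) : ℝ :=
  ∑ s : Fin (2^i) → Bool, ∑ b : Bool,
    f (fun j => pm (s j)) (pm b) * genMass γ i (fun j => pm (s j)) (pm b)

section Aux

/-- Boolean version of gate evaluation. -/
def gB (g : BGate) (a b : Bool) : Bool := decide (g.eval (pm a) (pm b) = 1)

lemma pm_gB (g : BGate) (a b : Bool) : pm (gB g a b) = g.eval (pm a) (pm b) := by
  cases g <;> cases a <;> cases b <;> decide

lemma pm_eq_one_iff (a : Bool) : pm a = 1 ↔ a = true := by cases a <;> decide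
lemma pm_eq_neg_one_iff (a : Bool) : pm a = -1 ↔ a = false := by cases a <;> decide
lemma pm_inj {a b : Bool} : pm a = pm b ↔ a = b := by cases a <;> cases b <;> decide

/-- Index of one of the two children of coordinate `j`. -/
def idx (i : ℕ) (j : Fin (2^i)) (side : Bool) : Fin (2^(i+1)) :=
  ⟨2*j.1 + (if side then 0 else 1), by
    have h := j.2; have h2 : (2:ℕ)^(i+1) = 2^i*2 := pow_succ 2 i
    cases side <;> simp <;> omega⟩

/-- The parent coordinate. -/
def half (i : ℕ) (k : Fin (2^(i+1))) : Fin (2^i) :=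
  ⟨k.1/2, by have h := k.2; have h2 : (2:ℕ)^(i+1) = 2^i*2 := pow_succ 2 i; omega⟩

/-- Interleaving of pair configurations. -/
def splice (i : ℕ) (t : Fin (2^i) → Bool × Bool) (k : Fin (2^(i+1))) : Bool :=
  if k.1 % 2 = 0 then (t (half i k)).1 else (t (half i k)).2

lemma idx_val (i : ℕ) (j : Fin (2^i)) (side : Bool) :
    (idx i j side).1 = 2*j.1 + (if side then 0 else 1) := rfl

lemma half_idx (i : ℕ) (j : Fin (2^i)) (side : Bool) : half i (idx i j side) = j := by
  apply Fin.ext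
  show (2*j.1 + (if side then 0 else 1)) / 2 = j.1
  cases side <;> simp <;> omega

lemma splice_idx_t (i : ℕ) (t : Fin (2^i) → Bool × Bool) (j : Fin (2^i)) :
    splice i t (idx i j true) = (t j).1 := by
  show (if (2*j.1 + 0) % 2 = 0 then (t (half i _)).1 else (t (half i _)).2) = (t j).1
  rw [if_pos (by omega), half_idx]

lemma splice_idx_f (i : ℕ) (t : Fin (2^i) → Bool × Bool) (j : Fin (2^i)) :
    splice i t (idx i j false) = (t j).2 := by
  show (if (2*j.1 + 1) % 2 = 0 then (t (half i _)).1 else (t (half i _)).2) = (t j).2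
  rw [if_neg (by omega), half_idx]

def spliceEquiv (i : ℕ) : (Fin (2^i) → Bool × Bool) ≃ (Fin (2^(i+1)) → Bool) where
  toFun := splice i
  invFun s j := (s (idx i j true), s (idx i j false))
  left_inv t := by
    funext j
    exact Prod.ext (splice_idx_t i t j) (splice_idx_f i t j)
  right_inv s := by
    funext k
    show splice i _ k = s k
    rw [splice]
    by_cases h : k.1 % 2 = 0
    · rw [if_pos h]
      show s (idx i (half i k) true) = s k
      congr 1
      apply Fin.ext
      rw [idx_val]
      show 2*(k.1/2) + (if True then 0 else 1) = k.1
      simp; omega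
    · rw [if_neg h]
      show s (idx i (half i k) false) = s k
      congr 1
      apply Fin.ext
      rw [idx_val]
      show 2*(k.1/2) + (if False then 0 else 1) = k.1
      simp; omega

lemma genMass_splice (γ : ℕ → ℕ → BGate) (i : ℕ) (t : Fin (2^i) → Bool × Bool) (y : ℤ) :
    genMass γ (i+1) (fun k => pm (splice i t k)) y
      = genMass γ i (fun j : Fin (2^i) => pm (gB (γ i j.1) (t j).1 (t j).2)) y *
          ∏ j : Fin (2^i), (((γ i j.1).patCount (pm (gB (γ i j.1) (t j).1 (t j).2)) : ℝ))⁻¹ := by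
  have hprev : prevLayer i (γ i) (fun k => pm (splice i t k))
      = fun j : Fin (2^i) => pm (gB (γ i j.1) (t j).1 (t j).2) := by
    funext j
    show (γ i j.1).eval (pm (splice i t _)) (pm (splice i t _)) = _
    have e1 : (⟨2*j.1, by have h := j.2; rw [pow_succ]; omega⟩ : Fin (2^(i+1))) = idx i j true :=
      Fin.ext (by rw [idx_val]; simp)
    have e2 : (⟨2*j.1+1, by have h := j.2; rw [pow_succ]; omega⟩ : Fin (2^(i+1))) = idx i j false :=
      Fin.ext (by simp [idx_val])
    rw [e1, e2, splice_idx_t, splice_idx_f, pm_gB]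
  show (if ∀ k, pm (splice i t k) = 1 ∨ pm (splice i t k) = -1 then
        genMass γ i (prevLayer i (γ i) (fun k => pm (splice i t k))) y *
          ∏ j : Fin (2^i), (((γ i j.1).patCount (prevLayer i (γ i) (fun k => pm (splice i t k)) j) : ℝ))⁻¹
      else 0) = _
  rw [if_pos (fun k => by cases h : splice i t k <;> simp [h, pm]), hprev]

end Aux

section Core

noncomputable def wsum (g : BGate) (φ : Bool × Bool → ℝ) (u : Bool) : ℝ :=
  (∑ p : Bool × Bool, if gB g p.1 p.2 = u then φ p else 0) * ((g.patCount (pm u) : ℝ))⁻¹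

lemma patCount_pos (g : BGate) (u : Bool) : 0 < g.patCount (pm u) := by
  cases g <;> cases u <;> decide

lemma sum_gB_count (g : BGate) (u : Bool) :
    (∑ p : Bool × Bool, if gB g p.1 p.2 = u then (1:ℝ) else 0) = (g.patCount (pm u) : ℝ) := by
  rw [Finset.sum_boole]
  unfold BGate.patCount
  congr 2
  apply Finset.filter_congr
  intro p _
  rw [← pm_inj, pm_gB]

lemma wsum_one (g : BGate) (u : Bool) : wsum g (fun _ => 1) u = 1 := by
  rw [wsum, sum_gB_count, mul_inv_cancel₀]
  exact_mod_cast (patCount_pos g u).ne'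

lemma fiber_sum (i : ℕ) (g : Fin (2^i) → BGate) (u : Fin (2^i) → Bool) (j' : Fin (2^i))
    (φ : Bool × Bool → ℝ) :
    (∑ t ∈ Finset.univ.filter
        (fun t : Fin (2^i) → Bool × Bool => (fun j => gB (g j) (t j).1 (t j).2) = u),
      (φ (t j') * ∏ j : Fin (2^i), (((g j).patCount (pm (u j)) : ℝ))⁻¹))
    = wsum (g j') φ (u j') := by
  rw [Finset.sum_filter]
  have key : ∀ t : Fin (2^i) → Bool × Bool,
      (if (fun j => gB (g j) (t j).1 (t j).2) = u then
          φ (t j') * ∏ j : Fin (2^i), (((g j).patCount (pm (u j)) : ℝ))⁻¹ else 0)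
      = ∏ j : Fin (2^i), ((if gB (g j) (t j).1 (t j).2 = u j then (1:ℝ) else 0) *
          (((g j).patCount (pm (u j)) : ℝ))⁻¹ * (if j = j' then φ (t j) else 1)) := by
    intro t
    rw [show (∏ j : Fin (2^i), ((if gB (g j) (t j).1 (t j).2 = u j then (1:ℝ) else 0) *
          (((g j).patCount (pm (u j)) : ℝ))⁻¹ * (if j = j' then φ (t j) else 1)))
        = (∏ j : Fin (2^i), (if gB (g j) (t j).1 (t j).2 = u j then (1:ℝ) else 0)) *
          (∏ j : Fin (2^i), (((g j).patCount (pm (u j)) : ℝ))⁻¹) *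
          (∏ j : Fin (2^i), (if j = j' then φ (t j) else 1)) from by
      rw [← Finset.prod_mul_distrib, ← Finset.prod_mul_distrib]]
    rw [Finset.prod_boole, Finset.prod_ite_eq']
    simp only [Finset.mem_univ, true_implies, if_true, funext_iff]
    by_cases h : ∀ j : Fin (2^i), gB (g j) (t j).1 (t j).2 = u j <;> simp [h] <;> ring
  rw [Finset.sum_congr rfl (fun t _ => key t)]
  have hsum := Finset.prod_univ_sum (fun _ : Fin (2^i) => (Finset.univ : Finset (Bool × Bool)))
      (fun j p => (if gB (g j) p.1 p.2 = u j then (1:ℝ) else 0) *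
        (((g j).patCount (pm (u j)) : ℝ))⁻¹ * (if j = j' then φ p else 1))
  rw [Fintype.piFinset_univ] at hsum
  rw [← hsum]
  have factor : ∀ j : Fin (2^i),
      (∑ p : Bool × Bool, ((if gB (g j) p.1 p.2 = u j then (1:ℝ) else 0) *
          (((g j).patCount (pm (u j)) : ℝ))⁻¹ * (if j = j' then φ p else 1)))
      = if j = j' then wsum (g j') φ (u j') else 1 := by
    intro j
    by_cases h : j = j'
    · subst h
      simp only [eq_self_iff_true, if_true]
      rw [wsum, Finset.sum_mul]
      apply Finset.sum_congr rfl
      intro p _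
      by_cases hp : gB (g j) p.1 p.2 = u j <;> simp [hp] <;> ring
    · simp only [if_neg h, mul_one]
      rw [← Finset.sum_mul, sum_gB_count, mul_inv_cancel₀]
      exact_mod_cast (patCount_pos (g j) (u j)).ne'
  rw [Finset.prod_congr rfl (fun j _ => factor j), Finset.prod_ite_eq']
  simp

lemma genPr_step (γ : ℕ → ℕ → BGate) (i : ℕ) (c : ℤ) (j' : Fin (2^i)) (φ : Bool × Bool → ℝ) :
    (∑ t : Fin (2^i) → Bool × Bool, ∑ b : Bool,
       φ (t j') * genMass γ (i+1) (fun k => pm (splice i t k)) (pm b) * (if pm b = c then 1 else 0))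
    = wsum (γ i j'.1) φ true * genPr γ i (fun z y => z j' = 1 ∧ y = c)
    + wsum (γ i j'.1) φ false * genPr γ i (fun z y => z j' = -1 ∧ y = c) := by
  have stepA : (∑ t : Fin (2^i) → Bool × Bool, ∑ b : Bool,
       φ (t j') * genMass γ (i+1) (fun k => pm (splice i t k)) (pm b) * (if pm b = c then 1 else 0))
      = ∑ u : Fin (2^i) → Bool, ∑ b : Bool,
        (genMass γ i (fun j => pm (u j)) (pm b) * (if pm b = c then 1 else 0)) *
          wsum (γ i j'.1) φ (u j') := by
    rw [Finset.sum_comm]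
    rw [show (∑ u : Fin (2^i) → Bool, ∑ b : Bool,
        (genMass γ i (fun j => pm (u j)) (pm b) * (if pm b = c then 1 else 0)) *
          wsum (γ i j'.1) φ (u j'))
      = ∑ b : Bool, ∑ u : Fin (2^i) → Bool,
        (genMass γ i (fun j => pm (u j)) (pm b) * (if pm b = c then 1 else 0)) *
          wsum (γ i j'.1) φ (u j') from Finset.sum_comm]
    apply Finset.sum_congr rfl
    intro b _
    rw [← Finset.sum_fiberwise Finset.univ (fun t : Fin (2^i) → Bool × Bool =>
          (fun j => gB (γ i j.1) (t j).1 (t j).2 : Fin (2^i) → Bool))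
        (fun t => φ (t j') * genMass γ (i+1) (fun k => pm (splice i t k)) (pm b) *
          (if pm b = c then 1 else 0))]
    apply Finset.sum_congr rfl
    intro u _
    have inner : ∀ t ∈ Finset.univ.filter
        (fun t : Fin (2^i) → Bool × Bool => (fun j => gB (γ i j.1) (t j).1 (t j).2) = u),
        φ (t j') * genMass γ (i+1) (fun k => pm (splice i t k)) (pm b) * (if pm b = c then 1 else 0)
        = (genMass γ i (fun j => pm (u j)) (pm b) * (if pm b = c then 1 else 0)) *
            (φ (t j') * ∏ j : Fin (2^i), (((γ i j.1).patCount (pm (u j)) : ℝ))⁻¹) := by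
      intro t ht
      have hz : (fun j : Fin (2^i) => gB (γ i j.1) (t j).1 (t j).2) = u :=
        (Finset.mem_filter.mp ht).2
      rw [genMass_splice]
      rw [show (fun j : Fin (2^i) => pm (gB (γ i j.1) (t j).1 (t j).2)) = fun j => pm (u j) from
        funext (fun j => by rw [congrFun hz j])]
      rw [show (∏ j : Fin (2^i), (((γ i j.1).patCount (pm (gB (γ i j.1) (t j).1 (t j).2)) : ℝ))⁻¹)
          = ∏ j : Fin (2^i), (((γ i j.1).patCount (pm (u j)) : ℝ))⁻¹ from
        Finset.prod_congr rfl (fun j _ => by rw [congrFun hz j])]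
      ring
    rw [Finset.sum_congr rfl inner, ← Finset.mul_sum,
        fiber_sum i (fun j => γ i j.1) u j' φ]
  rw [stepA]
  rw [genPr, genPr, Finset.mul_sum, Finset.mul_sum, ← Finset.sum_add_distrib]
  apply Finset.sum_congr rfl
  intro u _
  rw [Finset.mul_sum, Finset.mul_sum, ← Finset.sum_add_distrib]
  apply Finset.sum_congr rfl
  intro b _
  by_cases hb : pm b = c <;> cases hu : u j' <;>
    simp [hb, hu, pm_eq_one_iff, pm_eq_neg_one_iff, wsum] <;> ring

end Core

section Bridge

lemma genPr_succ_point (γ : ℕ → ℕ → BGate) (i : ℕ) (c : ℤ) (j' : Fin (2^i)) (side : Bool) :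
    genPr γ (i+1) (fun x y => x (idx i j' side) = 1 ∧ y = c)
      = wsum (γ i j'.1) (fun p => if (if side then p.1 else p.2) = true then 1 else 0) true *
          genPr γ i (fun z y => z j' = 1 ∧ y = c)
      + wsum (γ i j'.1) (fun p => if (if side then p.1 else p.2) = true then 1 else 0) false *
          genPr γ i (fun z y => z j' = -1 ∧ y = c) := by
  rw [← genPr_step γ i c j' _]
  rw [genPr, ← Equiv.sum_comp (spliceEquiv i)]
  apply Finset.sum_congr rfl; intro t _
  simp only [spliceEquiv, Equiv.coe_fn_mk]
  apply Finset.sum_congr rfl; intro b _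
  show (if pm (splice i t (idx i j' side)) = 1 ∧ pm b = c then
      genMass γ (i+1) (fun k => pm (splice i t k)) (pm b) else 0) = _
  cases side
  · rw [splice_idx_f]
    by_cases hb : pm b = c <;> cases h2 : (t j').2 <;>
      simp [hb, h2, pm_eq_one_iff]
  · rw [splice_idx_t]
    by_cases hb : pm b = c <;> cases h2 : (t j').1 <;>
      simp [hb, h2, pm_eq_one_iff]

lemma genPr_compl (γ : ℕ → ℕ → BGate) (i : ℕ) (j' : Fin (2^i)) (c : ℤ) :
    genPr γ i (fun z y => z j' = 1 ∧ y = c) + genPr γ i (fun z y => z j' = -1 ∧ y = c)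
      = genPr γ i (fun _ y => y = c) := by
  rw [genPr, genPr, genPr, ← Finset.sum_add_distrib]
  apply Finset.sum_congr rfl; intro s _
  rw [← Finset.sum_add_distrib]
  apply Finset.sum_congr rfl; intro b _
  by_cases hb : pm b = c <;> cases h : s j' <;> simp [hb, h, pm_eq_one_iff, pm_eq_neg_one_iff]

lemma genPr_marg_succ (γ : ℕ → ℕ → BGate) (i : ℕ) (c : ℤ) :
    genPr γ (i+1) (fun _ y => y = c) = genPr γ i (fun _ y => y = c) := by
  have j0 : Fin (2^i) := ⟨0, by positivity⟩
  have step := genPr_step γ i c j0 (fun _ => 1)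
  rw [wsum_one, wsum_one, one_mul, one_mul, genPr_compl] at step
  rw [← step, genPr, ← Equiv.sum_comp (spliceEquiv i)]
  apply Finset.sum_congr rfl; intro t _
  simp only [spliceEquiv, Equiv.coe_fn_mk]
  apply Finset.sum_congr rfl; intro b _
  by_cases hb : pm b = c <;> simp [hb]

def e0 : (Fin (2^0) → Bool) ≃ Bool where
  toFun s := s ⟨0, by norm_num⟩
  invFun a := fun _ => a
  left_inv s := by
    funext j
    show s ⟨0, by norm_num⟩ = s j
    congr 1
    apply Fin.ext
    have h := j.2
    have h2 : (2:ℕ)^0 = 1 := rfl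
    omega
  right_inv a := rfl

lemma genPr_zero (γ : ℕ → ℕ → BGate) (E : (Fin (2^0) → ℤ) → ℤ → Prop)
    [inst : ∀ x y, Decidable (E x y)] :
    genPr γ 0 E = (if E (fun _ => 1) 1 then (1:ℝ)/2 else 0) +
      (if E (fun _ => -1) (-1) then (1:ℝ)/2 else 0) := by
  rw [genPr, ← Equiv.sum_comp e0.symm, Fintype.sum_bool]
  show (∑ b : Bool, if E (fun _ => pm true) (pm b) then genMass γ 0 (fun _ => pm true) (pm b) else 0)
    + (∑ b : Bool, if E (fun _ => pm false) (pm b) then genMass γ 0 (fun _ => pm false) (pm b) else 0)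
    = _
  rw [Fintype.sum_bool, Fintype.sum_bool]
  have hm : ∀ a b : Bool, genMass γ 0 (fun _ => pm a) (pm b) = if a = b then 1/2 else 0 := by
    intro a b
    show (if pm a = pm b ∧ (pm b = 1 ∨ pm b = -1) then (1:ℝ)/2 else 0) = _
    cases a <;> cases b <;> simp [pm]
  rw [hm, hm, hm, hm]
  show (if E (fun _ => 1) 1 then _ else 0) + (if E (fun _ => 1) (-1) then _ else 0)
    + ((if E (fun _ => -1) 1 then _ else 0) + (if E (fun _ => -1) (-1) then _ else 0)) = _
  norm_num

lemma wsum_diff (g : BGate) (side : Bool) :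
    |wsum g (fun p => if (if side then p.1 else p.2) = true then (1:ℝ) else 0) true -
     wsum g (fun p => if (if side then p.1 else p.2) = true then (1:ℝ) else 0) false| = 2/3 := by
  have d1 : BGate.and.patCount 1 = 1 := by decide
  have d2 : BGate.and.patCount (-1) = 3 := by decide
  have d3 : BGate.or.patCount 1 = 3 := by decide
  have d4 : BGate.or.patCount (-1) = 1 := by decide
  have d5 : BGate.nand.patCount 1 = 3 := by decide
  have d6 : BGate.nand.patCount (-1) = 1 := by decide
  have d7 : BGate.nor.patCount 1 = 1 := by decide
  have d8 : BGate.nor.patCount (-1) = 3 := by decide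
  cases g <;> cases side <;>
  · rw [wsum, wsum, Fintype.sum_prod_type, Fintype.sum_prod_type]
    simp only [Fintype.sum_bool]
    rw [abs_eq (by norm_num : (0:ℝ) ≤ 2/3)]
    norm_num [gB, pm, BGate.eval, d1, d2, d3, d4, d5, d6, d7, d8]
end Bridge

lemma genPr_marg_val (γ : ℕ → ℕ → BGate) (c : ℤ) (hc : c = 1 ∨ c = -1) :
    ∀ i : ℕ, genPr γ i (fun _ y => y = c) = 1/2 := by
  intro i
  induction i with
  | zero => rw [genPr_zero]; rcases hc with h | h <;> subst h <;> norm_num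
  | succ i ih => rw [genPr_marg_succ]; exact ih


/-- under `D^(i)`, for every coordinate `j`, the conditional
probabilities `p⁺ = P(x_j = 1 | y = 1)` and `p⁻ = P(x_j = 1 | y = −1)` satisfy
`|p⁺ − p⁻| = (2/3)^i`. -/
theorem stmt6 (γ : ℕ → ℕ → BGate) (i : ℕ) (j : Fin (2^i)) :
    |genPr γ i (fun x y => x j = 1 ∧ y = 1) / genPr γ i (fun _ y => y = 1) -
     genPr γ i (fun x y => x j = 1 ∧ y = -1) / genPr γ i (fun _ y => y = -1)|
      = (2/3 : ℝ)^i := by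
  induction i with
  | zero =>
    rw [genPr_zero, genPr_zero, genPr_zero, genPr_zero]
    norm_num
  | succ i ih =>
    set jp : Fin (2^i) := half i j with hjp
    set side : Bool := decide (j.1 % 2 = 0) with hside
    have hj : j = idx i jp side := by
      apply Fin.ext
      rw [idx_val]
      show j.1 = 2*(j.1/2) + (if decide (j.1 % 2 = 0) = true then 0 else 1)
      by_cases h : j.1 % 2 = 0 <;> simp [h] <;> omega
    have m1 : genPr γ i (fun _ y => y = 1) = 1/2 := genPr_marg_val γ 1 (Or.inl rfl) i
    have m2 : genPr γ i (fun _ y => y = -1) = 1/2 := genPr_marg_val γ (-1) (Or.inr rfl) i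
    have m1' : genPr γ (i+1) (fun _ y => y = 1) = 1/2 := genPr_marg_val γ 1 (Or.inl rfl) (i+1)
    have m2' : genPr γ (i+1) (fun _ y => y = -1) = 1/2 := genPr_marg_val γ (-1) (Or.inr rfl) (i+1)
    have c1 : genPr γ i (fun z y => z jp = -1 ∧ y = 1)
        = 1/2 - genPr γ i (fun z y => z jp = 1 ∧ y = 1) := by
      have h := genPr_compl γ i jp 1; rw [m1] at h; linarith
    have c2 : genPr γ i (fun z y => z jp = -1 ∧ y = -1)
        = 1/2 - genPr γ i (fun z y => z jp = 1 ∧ y = -1) := by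
      have h := genPr_compl γ i jp (-1); rw [m2] at h; linarith
    rw [hj, genPr_succ_point γ i 1 jp side, genPr_succ_point γ i (-1) jp side,
        m1', m2', c1, c2]
    set W1 := wsum (γ i jp.1) (fun p => if (if side then p.1 else p.2) = true then (1:ℝ) else 0) true
    set W0 := wsum (γ i jp.1) (fun p => if (if side then p.1 else p.2) = true then (1:ℝ) else 0) false
    set a := genPr γ i (fun z y => z jp = 1 ∧ y = 1)
    set b := genPr γ i (fun z y => z jp = 1 ∧ y = -1)
    have key : (W1*a + W0*(1/2 - a))/(1/2 : ℝ) - (W1*b + W0*(1/2 - b))/(1/2)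
        = (W1 - W0) * (a/(1/2) - b/(1/2)) := by ring
    have ihh := ih jp
    rw [m1, m2] at ihh
    rw [key, abs_mul, wsum_diff (γ i jp.1) side, ihh, pow_succ]
    ring
end
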